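/- For a ∈ ℂ define f_a(z) = (e^z/(1+z)) · exp(−a · Log(e^{2z}(1−z)/(1+z))) for |z| < 1/2, where Log is the principal branch of the complex logarithm (which is well defined here since e^{2z}(1−z)/(1+z) avoids the ray (−∞,0] for |z| < 1/2). Let A_m(a) = (1/m!) · (d/dz)^m f_a(z)|_{z=0} denote its Taylor coefficients at 0. Then there exist C > 0 and a₀ > 0 such that for every a ∈ ℂ with Re a ≤ −a₀ and |Im a| ≤ 1, and every m ∈ ℤ_{≥0}, one has |A_m(a)| ≤ C |a|^{(5/12) m}. -/

import Mathlib

open MeasureTheory Set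
open scoped NNReal

/-- The generating function `f_a(z) = (e^z/(1+z)) · (e^{2z}(1-z)/(1+z))^{-a}` of the
coefficients in Tricomi's Bessel expansion of the confluent hypergeometric function,
with the power defined via the principal branch of the logarithm. -/
noncomputable def tricomiGen (a z : ℂ) : ℂ :=
  (Complex.exp z / (1 + z)) *
    Complex.exp (-a * Complex.log (Complex.exp (2 * z) * (1 - z) / (1 + z)))

/-- The Taylor coefficient `A_m(a)` of `f_a` at `z = 0`. -/
noncomputable def tricomiCoeff (m : ℕ) (a : ℂ) : ℂ :=
  iteratedDeriv m (tricomiGen a) 0 / (Nat.factorial m : ℂ)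

/-- `h(z) = 2z + log(1-z) - log(1+z)`, a branch of `log(e^{2z}(1-z)/(1+z))`. -/
noncomputable def tricomiH (z : ℂ) : ℂ :=
  2 * z + Complex.log (1 - z) - Complex.log (1 + z)

noncomputable def tricomiF (a z : ℂ) : ℂ :=
  (Complex.exp z / (1 + z)) * Complex.exp (-a * tricomiH z)

lemma logTaylor_three (w : ℂ) : Complex.logTaylor 3 w = w - w ^ 2 / 2 := by
  simp [Complex.logTaylor_succ, Complex.logTaylor_zero]
  ring

lemma tricomiH_small {z : ℂ} (hz : ‖z‖ ≤ 1 / 2) : ‖tricomiH z‖ ≤ 5 / 2 := by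
  have hz1 : ‖z‖ < 1 := lt_of_le_of_lt hz (by norm_num)
  have h1 : ‖Complex.log (1 + z)‖ ≤ 3 / 2 * ‖z‖ := Complex.norm_log_one_add_half_le_self hz
  have h2 : ‖Complex.log (1 - z)‖ ≤ 3 / 2 * ‖z‖ := by
    have := Complex.norm_log_one_add_half_le_self (z := -z) (by simpa using hz)
    simpa [sub_eq_add_neg] using this
  calc ‖tricomiH z‖ ≤ ‖2 * z + Complex.log (1 - z)‖ + ‖Complex.log (1 + z)‖ :=
        norm_sub_le _ _
    _ ≤ ‖2 * z‖ + ‖Complex.log (1 - z)‖ + ‖Complex.log (1 + z)‖ := by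
        gcongr; exact norm_add_le _ _
    _ ≤ 2 * ‖z‖ + 3 / 2 * ‖z‖ + 3 / 2 * ‖z‖ := by
        gcongr
        simp [norm_mul]
    _ = 5 * ‖z‖ := by ring
    _ ≤ 5 / 2 := by linarith

lemma tricomiH_cube {z : ℂ} (hz : ‖z‖ ≤ 1 / 2) : ‖tricomiH z‖ ≤ 2 * ‖z‖ ^ 3 := by
  have hz1 : ‖z‖ < 1 := lt_of_le_of_lt hz (by norm_num)
  have hzn : ‖(-z : ℂ)‖ < 1 := by simpa using hz1
  have h1 := Complex.norm_log_sub_logTaylor_le 2 hz1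
  have h2 := Complex.norm_log_sub_logTaylor_le 2 hzn
  rw [logTaylor_three] at h1 h2
  rw [show (1 : ℂ) + -z = 1 - z by ring] at h2
  norm_num at h1 h2
  have hinv : (1 - ‖z‖)⁻¹ ≤ 2 := by
    rw [inv_le_comm₀ (by linarith) (by norm_num)]
    linarith
  have key : tricomiH z =
      (Complex.log (1 - z) - (-z - z ^ 2 / 2)) - (Complex.log (1 + z) - (z - z ^ 2 / 2)) := by
    rw [tricomiH]; ring
  have hb : ‖z‖ ^ 3 * (1 - ‖z‖)⁻¹ / 3 ≤ ‖z‖ ^ 3 * 2 / 3 := by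
    gcongr
  calc ‖tricomiH z‖
      ≤ ‖Complex.log (1 - z) - (-z - z ^ 2 / 2)‖ +
        ‖Complex.log (1 + z) - (z - z ^ 2 / 2)‖ := by
        rw [key]; exact norm_sub_le _ _
    _ ≤ ‖z‖ ^ 3 * 2 / 3 + ‖z‖ ^ 3 * 2 / 3 :=
        add_le_add (h2.trans hb) (h1.trans hb)
    _ ≤ 2 * ‖z‖ ^ 3 := by nlinarith [pow_nonneg (norm_nonneg z) 3]

lemma one_add_ne {z : ℂ} (hz : ‖z‖ < 1) : (1 : ℂ) + z ≠ 0 := by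
  intro h
  have : z = -1 := by linear_combination h
  rw [this] at hz
  norm_num at hz

lemma one_sub_ne {z : ℂ} (hz : ‖z‖ < 1) : (1 : ℂ) - z ≠ 0 := by
  intro h
  have : z = 1 := by linear_combination -h
  rw [this] at hz
  norm_num at hz

lemma exp_tricomiH {z : ℂ} (hz : ‖z‖ < 1) :
    Complex.exp (tricomiH z) = Complex.exp (2 * z) * (1 - z) / (1 + z) := by
  rw [tricomiH, Complex.exp_sub, Complex.exp_add, Complex.exp_log (one_sub_ne hz),
    Complex.exp_log (one_add_ne hz)]

lemma tricomiGen_eq {a z : ℂ} (hz : ‖z‖ < 1 / 2) : tricomiGen a z = tricomiF a z := by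
  have hz1 : ‖z‖ < 1 := hz.trans_le (by norm_num)
  have him : |(tricomiH z).im| < Real.pi := by
    have h1 : |(tricomiH z).im| ≤ ‖tricomiH z‖ := Complex.abs_im_le_norm _
    have h2 := tricomiH_small hz.le
    have : (5 : ℝ) / 2 < Real.pi := by
      have := Real.pi_gt_three
      linarith
    linarith
  have hlog : Complex.log (Complex.exp (2 * z) * (1 - z) / (1 + z)) = tricomiH z := by
    rw [← exp_tricomiH hz1, Complex.log_exp (by cases abs_lt.mp him; linarith)
      (by cases abs_lt.mp him; linarith)]
  rw [tricomiGen, tricomiF, hlog]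

lemma tricomiF_differentiableAt (a : ℂ) {z : ℂ} (hz : ‖z‖ < 1 / 2) :
    DifferentiableAt ℂ (tricomiF a) z := by
  have hz1 : ‖z‖ < 1 := hz.trans_le (by norm_num)
  have hre : |z.re| ≤ ‖z‖ := Complex.abs_re_le_norm z
  have hs1 : (1 : ℂ) - z ∈ Complex.slitPlane := by
    refine Or.inl ?_
    simp only [Complex.sub_re, Complex.one_re]
    cases abs_le.mp hre; linarith
  have hs2 : (1 : ℂ) + z ∈ Complex.slitPlane := by
    refine Or.inl ?_
    simp only [Complex.add_re, Complex.one_re]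
    cases abs_le.mp hre; linarith
  have hH : DifferentiableAt ℂ tricomiH z := by
    refine DifferentiableAt.sub (DifferentiableAt.add (by fun_prop) ?_) ?_
    · exact ((differentiableAt_const _).sub differentiableAt_id).clog hs1
    · exact ((differentiableAt_const _).add differentiableAt_id).clog hs2
  refine DifferentiableAt.mul ?_ ?_
  · exact Complex.differentiable_exp.differentiableAt.div
      ((differentiableAt_const _).add differentiableAt_id) (one_add_ne hz1)
  · exact ((differentiableAt_const _).mul hH).cexp

/-- Cauchy estimate for the iterated derivative at the center. -/
lemma cauchy_estimate {f : ℂ → ℂ} {R : ℝ≥0} (hR : 0 < R)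
    (hd : DifferentiableOn ℂ f (Metric.closedBall 0 R)) {M : ℝ}
    (hM : ∀ z ∈ Metric.closedBall (0 : ℂ) (R : ℝ), ‖f z‖ ≤ M) (n : ℕ) :
    ‖iteratedDeriv n f 0‖ ≤ n.factorial * (M * ((R : ℝ)⁻¹) ^ n) := by
  have h := hd.hasFPowerSeriesOnBall hR
  have key : iteratedDeriv n f 0 = n.factorial • ((cauchyPowerSeries f 0 R n) fun _ => (1 : ℂ)) := by
    rw [iteratedDeriv_eq_iteratedFDeriv, ← h.factorial_smul (1 : ℂ) n]
  have hM0 : 0 ≤ M := le_trans (norm_nonneg _) (hM 0 (by simp [hR.le]))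
  have hcont : Continuous fun θ : ℝ => ‖f (circleMap 0 R θ)‖ := by
    refine Continuous.norm ?_
    refine ContinuousOn.comp_continuous hd.continuousOn (continuous_circleMap 0 R) ?_
    intro θ
    simp [Metric.mem_closedBall, Complex.dist_eq, norm_circleMap_zero]
  have hint : ∫ θ : ℝ in (0 : ℝ)..2 * Real.pi, ‖f (circleMap 0 R θ)‖ ≤ 2 * Real.pi * M := by
    calc ∫ θ : ℝ in (0 : ℝ)..2 * Real.pi, ‖f (circleMap 0 R θ)‖
        ≤ ∫ _θ : ℝ in (0 : ℝ)..2 * Real.pi, M := by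
          refine intervalIntegral.integral_mono_on Real.two_pi_pos.le
            (hcont.intervalIntegrable _ _) (intervalIntegrable_const) ?_
          intro θ _
          exact hM _ (by simp [Metric.mem_closedBall, Complex.dist_eq, norm_circleMap_zero])
      _ = 2 * Real.pi * M := by simp
  have hnorm1 : ‖(cauchyPowerSeries f 0 R n) fun _ => (1 : ℂ)‖ ≤ M * ((R : ℝ)⁻¹) ^ n := by
    calc ‖(cauchyPowerSeries f 0 R n) fun _ => (1 : ℂ)‖
        ≤ ‖cauchyPowerSeries f 0 R n‖ * ∏ _i : Fin n, ‖(1 : ℂ)‖ :=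
          (cauchyPowerSeries f 0 R n).le_opNorm _
      _ = ‖cauchyPowerSeries f 0 R n‖ := by simp
      _ ≤ ((2 * Real.pi)⁻¹ * ∫ θ : ℝ in (0 : ℝ)..2 * Real.pi, ‖f (circleMap 0 R θ)‖) *
          |(R : ℝ)|⁻¹ ^ n := norm_cauchyPowerSeries_le f 0 R n
      _ ≤ ((2 * Real.pi)⁻¹ * (2 * Real.pi * M)) * |(R : ℝ)|⁻¹ ^ n := by
          have := Real.pi_pos
          gcongr
      _ = M * ((R : ℝ)⁻¹) ^ n := by
          rw [inv_mul_cancel_left₀ (by positivity), abs_of_nonneg (R.coe_nonneg)]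
  rw [key, ← Nat.cast_smul_eq_nsmul ℂ, smul_eq_mul, norm_mul, Complex.norm_natCast]
  gcongr

/-- There exist `C > 0` and `a₀ > 0` such that for every `a` with
`Re a ≤ -a₀` and `|Im a| ≤ 1` and every `m`, `|A_m(a)| ≤ C |a|^{(5/12) m}`. -/
theorem tricomi_coefficient_bound :
    ∃ C > 0, ∃ a₀ > 0, ∀ a : ℂ, a.re ≤ -a₀ → |a.im| ≤ 1 → ∀ m : ℕ,
      ‖tricomiCoeff m a‖ ≤ C * ‖a‖ ^ ((5 : ℝ) / 12 * m) := by
  refine ⟨100, by norm_num, 32, by norm_num, fun a ha _ m => ?_⟩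
  set A := ‖a‖ with hAdef
  have hA32 : (32 : ℝ) ≤ A := by
    calc (32 : ℝ) ≤ -a.re := by linarith
      _ ≤ |a.re| := neg_le_abs a.re
      _ ≤ A := Complex.abs_re_le_norm a
  have hA0 : (0 : ℝ) < A := by linarith
  have hA1 : (1 : ℝ) ≤ A := by linarith
  set S : ℝ := A ^ ((5 : ℝ) / 12) with hSdef
  have hS0 : 0 < S := Real.rpow_pos_of_pos hA0 _
  have hS4 : (4 : ℝ) ≤ S := by
    have h1 : (32 : ℝ) ^ ((5 : ℝ) / 12) ≤ S := Real.rpow_le_rpow (by norm_num) hA32 (by norm_num)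
    have h32 : (32 : ℝ) = 2 ^ (5 : ℝ) := by
      rw [show (5 : ℝ) = ((5 : ℕ) : ℝ) by norm_num, Real.rpow_natCast]; norm_num
    have h2 : (32 : ℝ) ^ ((5 : ℝ) / 12) = 2 ^ ((25 : ℝ) / 12) := by
      rw [h32, ← Real.rpow_mul (by norm_num)]; norm_num
    have h3 : (2 : ℝ) ^ (2 : ℝ) ≤ 2 ^ ((25 : ℝ) / 12) :=
      Real.rpow_le_rpow_of_exponent_le (by norm_num) (by norm_num)
    have h4 : (2 : ℝ) ^ (2 : ℝ) = 4 := by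
      have h5 : ((2 : ℕ) : ℝ) = (2 : ℝ) := by norm_num
      rw [← h5, Real.rpow_natCast]; norm_num
    rw [h2] at h1
    linarith
  set R : ℝ := S⁻¹ with hRdef
  have hR0 : 0 < R := by positivity
  have hR4 : R ≤ 1 / 4 := by
    rw [hRdef, inv_le_comm₀ hS0 (by norm_num)]
    linarith
  have hS3 : S ^ (3 : ℕ) = A ^ ((5 : ℝ) / 4) := by
    rw [hSdef, ← Real.rpow_natCast (A ^ ((5 : ℝ) / 12)) 3, ← Real.rpow_mul hA0.le]
    norm_num
  have hA54 : A ≤ A ^ ((5 : ℝ) / 4) := by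
    nth_rw 1 [← Real.rpow_one A]
    exact Real.rpow_le_rpow_of_exponent_le hA1 (by norm_num)
  have hcube : A * R ^ 3 ≤ 1 := by
    have hR3 : R ^ 3 = (A ^ ((5 : ℝ) / 4))⁻¹ := by rw [hRdef, inv_pow, hS3]
    rw [hR3]
    calc A * (A ^ ((5 : ℝ) / 4))⁻¹ ≤ A ^ ((5 : ℝ) / 4) * (A ^ ((5 : ℝ) / 4))⁻¹ := by
          gcongr
      _ = 1 := mul_inv_cancel₀ (by positivity)
  -- bound on tricomiF on the closed ball of radius R
  have hFb : ∀ z ∈ Metric.closedBall (0 : ℂ) R, ‖tricomiF a z‖ ≤ 100 := by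
    intro z hz
    have hzR : ‖z‖ ≤ R := mem_closedBall_zero_iff.mp hz
    have hz4 : ‖z‖ ≤ 1 / 4 := hzR.trans hR4
    have hz2 : ‖z‖ ≤ 1 / 2 := by linarith
    have hexp1 := Real.exp_one_lt_d9
    have h1 : ‖Complex.exp z‖ ≤ 3 := by
      rw [Complex.norm_exp]
      have : z.re ≤ 1 := by
        have h' : |z.re| ≤ ‖z‖ := Complex.abs_re_le_norm z
        cases abs_le.mp h' with
        | intro ha1 ha2 => linarith
      calc Real.exp z.re ≤ Real.exp 1 := Real.exp_le_exp.mpr this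
        _ ≤ 3 := by linarith
    have h2 : (3 : ℝ) / 4 ≤ ‖1 + z‖ := by
      have h' := norm_sub_norm_le (1 : ℂ) (-z)
      simp only [norm_one, norm_neg, sub_neg_eq_add] at h'
      linarith
    have h3 : ‖Complex.exp (-a * tricomiH z)‖ ≤ Real.exp 2 := by
      rw [Complex.norm_exp]
      apply Real.exp_le_exp.mpr
      have hz3 : ‖z‖ ^ 3 ≤ R ^ 3 := by gcongr
      calc (-a * tricomiH z).re ≤ ‖-a * tricomiH z‖ := Complex.re_le_norm _
        _ = A * ‖tricomiH z‖ := by rw [norm_mul, norm_neg]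
        _ ≤ A * (2 * ‖z‖ ^ 3) := by gcongr; exact tricomiH_cube hz2
        _ ≤ 2 * (A * R ^ 3) := by nlinarith
        _ ≤ 2 := by linarith
    have hexp2 : Real.exp 2 ≤ 8 := by
      have : Real.exp 2 = Real.exp 1 * Real.exp 1 := by
        rw [← Real.exp_add]; norm_num
      nlinarith [Real.exp_pos 1]
    calc ‖tricomiF a z‖ = ‖Complex.exp z‖ / ‖1 + z‖ * ‖Complex.exp (-a * tricomiH z)‖ := by
          rw [tricomiF, norm_mul, norm_div]
      _ ≤ 3 / (3 / 4) * Real.exp 2 := by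
          gcongr
      _ ≤ 4 * 8 := by
          rw [show (3 : ℝ) / (3 / 4) = 4 by norm_num]
          gcongr
      _ ≤ 100 := by norm_num
  have hdiff : DifferentiableOn ℂ (tricomiF a) (Metric.closedBall 0 R) := by
    intro z hz
    have : ‖z‖ < 1 / 2 := lt_of_le_of_lt ((mem_closedBall_zero_iff.mp hz).trans hR4) (by norm_num)
    exact (tricomiF_differentiableAt a this).differentiableWithinAt
  set R' : ℝ≥0 := ⟨R, hR0.le⟩ with hR'def
  have hR'pos : 0 < R' := by exact_mod_cast hR0
  have hest := cauchy_estimate (R := R') hR'pos hdiff hFb m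
  have heq : tricomiGen a =ᶠ[nhds 0] tricomiF a := by
    filter_upwards [Metric.ball_mem_nhds (0 : ℂ) (by norm_num : (0 : ℝ) < 1 / 2)] with z hz
    exact tricomiGen_eq (mem_ball_zero_iff.mp hz)
  have hiter : iteratedDeriv m (tricomiGen a) 0 = iteratedDeriv m (tricomiF a) 0 :=
    heq.iteratedDeriv_eq m
  have hfac : (0 : ℝ) < (m.factorial : ℝ) := by exact_mod_cast m.factorial_pos
  calc ‖tricomiCoeff m a‖
      = ‖iteratedDeriv m (tricomiF a) 0‖ / (m.factorial : ℝ) := by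
        rw [tricomiCoeff, norm_div, Complex.norm_natCast, hiter]
    _ ≤ ((m.factorial : ℝ) * (100 * ((R' : ℝ)⁻¹) ^ m)) / (m.factorial : ℝ) := by gcongr
    _ = 100 * (R⁻¹) ^ m := by
        rw [mul_div_cancel_left₀ _ (ne_of_gt hfac)]
        rfl
    _ = 100 * A ^ ((5 : ℝ) / 12 * m) := by
        rw [hRdef, inv_inv, hSdef, ← Real.rpow_natCast (A ^ ((5 : ℝ) / 12)) m,
          ← Real.rpow_mul hA0.le]
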